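/- Let 0 < α < 1, x₀ ∈ ℝⁿ, R > 0, and define the truncated α-cone C(x) = min(|x - x₀|^α, R^α). Then for every x ∈ B(x₀,R) \ {x₀}: (i) inf_{y∈ℝⁿ, y≠x} (C(y) - C(x))/|y - x|^α ≤ -1, and (ii) sup_{y∈ℝⁿ, y≠x} (C(y) - C(x))/|y - x|^α < 1; hence the sum of the sup and the inf is strictly negative. -/

import Mathlib

open Real Set

/-- `t ↦ (t+c)^α - t^α` is antitone on positives for `0 < α < 1`. -/
lemma aux_incr_antitone {α : ℝ} (hα0 : 0 < α) (hα1 : α < 1) {a b c : ℝ}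
    (ha : 0 < a) (hab : a ≤ b) (hc : 0 ≤ c) :
    (b + c) ^ α - b ^ α ≤ (a + c) ^ α - a ^ α := by
  have hconv : Convex ℝ (Ici a) := convex_Ici a
  have hcont : ContinuousOn (fun t : ℝ => (t + c) ^ α - t ^ α) (Ici a) := by
    apply ContinuousOn.sub
    · exact ((continuous_id.add continuous_const).rpow_const
        (fun t => Or.inr hα0.le)).continuousOn
    · exact (continuous_id.rpow_const (fun t => Or.inr hα0.le)).continuousOn
  have hderiv : ∀ t ∈ interior (Ici a),
      HasDerivAt (fun t : ℝ => (t + c) ^ α - t ^ α)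
        (1 * α * (t + c) ^ (α - 1) - 1 * α * t ^ (α - 1)) t := by
    intro t ht
    rw [interior_Ici] at ht
    have ht0 : 0 < t := lt_of_le_of_lt ha.le ht
    have h1 : HasDerivAt (fun t : ℝ => (t + c) ^ α) (1 * α * (t + c) ^ (α - 1)) t :=
      ((hasDerivAt_id t).add_const c).rpow_const (Or.inl (by positivity))
    have h2 : HasDerivAt (fun t : ℝ => t ^ α) (1 * α * t ^ (α - 1)) t :=
      (hasDerivAt_id t).rpow_const (Or.inl (ne_of_gt ht0))
    exact h1.sub h2
  have hanti : AntitoneOn (fun t : ℝ => (t + c) ^ α - t ^ α) (Ici a) := by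
    apply antitoneOn_of_deriv_nonpos hconv hcont
    · intro t ht
      exact (hderiv t ht).differentiableAt.differentiableWithinAt
    · intro t ht
      rw [(hderiv t ht).deriv]
      rw [interior_Ici] at ht
      have ht0 : 0 < t := lt_of_le_of_lt ha.le ht
      have : (t + c) ^ (α - 1) ≤ t ^ (α - 1) :=
        Real.rpow_le_rpow_of_nonpos ht0 (by linarith) (by linarith)
      nlinarith
  exact hanti (Set.self_mem_Ici) hab hab

/-- Strict subadditivity of `rpow` for exponents in `(0,1)`. -/
lemma aux_strict_subadd {α : ℝ} (hα0 : 0 < α) (hα1 : α < 1) {a b : ℝ}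
    (ha : 0 < a) (hb : 0 < b) : (a + b) ^ α < a ^ α + b ^ α := by
  have hab : (0:ℝ) < a + b := by linarith
  have h1 : (a + b) ^ (α - 1) < a ^ (α - 1) :=
    Real.rpow_lt_rpow_of_neg ha (by linarith) (by linarith)
  have h2 : (a + b) ^ (α - 1) < b ^ (α - 1) :=
    Real.rpow_lt_rpow_of_neg hb (by linarith) (by linarith)
  have e0 : (a + b) ^ α = (a + b) * (a + b) ^ (α - 1) := by
    rw [← Real.rpow_one_add' hab.le (by intro h; apply ne_of_gt hα0; linarith)]
    ring_nf
  have e1 : a ^ α = a * a ^ (α - 1) := by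
    rw [← Real.rpow_one_add' ha.le (by intro h; apply ne_of_gt hα0; linarith)]
    ring_nf
  have e2 : b ^ α = b * b ^ (α - 1) := by
    rw [← Real.rpow_one_add' hb.le (by intro h; apply ne_of_gt hα0; linarith)]
    ring_nf
  rw [e0, e1, e2]
  nlinarith

/-- Subadditivity of `rpow` for exponents in `(0,1)`. -/
lemma aux_subadd {α : ℝ} (hα0 : 0 < α) (hα1 : α < 1) {a b : ℝ}
    (ha : 0 ≤ a) (hb : 0 ≤ b) : (a + b) ^ α ≤ a ^ α + b ^ α := by
  rcases ha.eq_or_lt with h | h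
  · rw [← h, zero_add, Real.zero_rpow (ne_of_gt hα0), zero_add]
  rcases hb.eq_or_lt with h' | h'
  · rw [← h', add_zero, Real.zero_rpow (ne_of_gt hα0), add_zero]
  · exact (aux_strict_subadd hα0 hα1 h h').le

/-- For the truncated `α`-cone `C(x) = min(|x - x₀|^α, R^α)` with `0 < α < 1` and every
`x ∈ B(x₀,R) \ {x₀}`: (i) `inf_{y≠x} (C(y) - C(x))/|y-x|^α ≤ -1`,
(ii) `sup_{y≠x} (C(y) - C(x))/|y-x|^α < 1`, hence their sum is strictly negative. -/
theorem stmt_12 (n : ℕ) (hn : 0 < n) (α R : ℝ) (hα0 : 0 < α) (hα1 : α < 1) (hR : 0 < R)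
    (x₀ x : EuclideanSpace ℝ (Fin n)) (hx : dist x x₀ < R) (hxx : x ≠ x₀)
    (C : EuclideanSpace ℝ (Fin n) → ℝ)
    (hC : C = fun y => min (dist y x₀ ^ α) (R ^ α)) :
    sInf {q : ℝ | ∃ y, y ≠ x ∧ q = (C y - C x) / dist y x ^ α} ≤ -1 ∧
    sSup {q : ℝ | ∃ y, y ≠ x ∧ q = (C y - C x) / dist y x ^ α} < 1 ∧
    sSup {q : ℝ | ∃ y, y ≠ x ∧ q = (C y - C x) / dist y x ^ α} +
      sInf {q : ℝ | ∃ y, y ≠ x ∧ q = (C y - C x) / dist y x ^ α} < 0 := by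
  subst hC
  set r : ℝ := dist x x₀ with hrdef
  have hr0 : 0 < r := dist_pos.mpr hxx
  have hrR : r < R := hx
  have hrα : r ^ α ≤ R ^ α := Real.rpow_le_rpow hr0.le hrR.le hα0.le
  have hrαpos : 0 < r ^ α := Real.rpow_pos_of_pos hr0 α
  have hRrpos : 0 < (R - r) ^ α := Real.rpow_pos_of_pos (by linarith) α
  set S : Set ℝ := {q : ℝ | ∃ y, y ≠ x ∧
      q = ((fun y => min (dist y x₀ ^ α) (R ^ α)) y
        - (fun y => min (dist y x₀ ^ α) (R ^ α)) x) / dist y x ^ α} with hS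
  have hCx : min (dist x x₀ ^ α) (R ^ α) = r ^ α := min_eq_left hrα
  -- `-1 ∈ S` via `y = x₀`
  have hmem : (-1 : ℝ) ∈ S := by
    refine ⟨x₀, Ne.symm hxx, ?_⟩
    simp only [dist_self, dist_comm x₀ x, ← hrdef, hCx,
      Real.zero_rpow (ne_of_gt hα0)]
    rw [min_eq_left (Real.rpow_nonneg hR.le α)]
    field_simp
    rw [min_eq_left hrα]; ring
  -- lower bound `-1`
  have hlow : ∀ q ∈ S, (-1 : ℝ) ≤ q := by
    rintro q ⟨y, hy, rfl⟩
    simp only [hCx]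
    set s : ℝ := dist y x₀ with hsdef
    have hd0 : 0 < dist y x := dist_pos.mpr hy
    have hdα : 0 < dist y x ^ α := Real.rpow_pos_of_pos hd0 α
    rw [le_div_iff₀ hdα]
    have hkey : r ^ α - min (s ^ α) (R ^ α) ≤ dist y x ^ α := by
      rcases le_total (s ^ α) (R ^ α) with h | h
      · rw [min_eq_left h]
        rcases le_total r s with h' | h'
        · have : r ^ α ≤ s ^ α := Real.rpow_le_rpow hr0.le h' hα0.le
          linarith [hdα.le]
        · have h1 : r ^ α ≤ (r - s) ^ α + s ^ α := by
            calc r ^ α = ((r - s) + s) ^ α := by ring_nf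
              _ ≤ (r - s) ^ α + s ^ α :=
                aux_subadd hα0 hα1 (sub_nonneg.mpr h') (by rw [hsdef]; exact dist_nonneg)
          have h2 : r - s ≤ dist y x := by
            have := abs_dist_sub_le x y x₀
            rw [dist_comm x y] at this
            have := abs_le.mp this
            linarith [this.2]
          have h3 : (r - s) ^ α ≤ dist y x ^ α :=
            Real.rpow_le_rpow (sub_nonneg.mpr h') h2 hα0.le
          linarith
      · rw [min_eq_right h]
        linarith [hdα.le]
    linarith
  -- upper bound `K = (R^α - r^α)/(R-r)^α`
  set K : ℝ := (R ^ α - r ^ α) / (R - r) ^ α with hK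
  have hK0 : 0 ≤ K := div_nonneg (by linarith) hRrpos.le
  have hupp : ∀ q ∈ S, q ≤ K := by
    rintro q ⟨y, hy, rfl⟩
    simp only [hCx]
    set s : ℝ := dist y x₀ with hsdef
    have hd0 : 0 < dist y x := dist_pos.mpr hy
    set d : ℝ := dist y x with hddef
    have hdα : 0 < d ^ α := Real.rpow_pos_of_pos hd0 α
    have hsd : s ≤ d + r := by
      have := dist_triangle y x x₀
      rw [← hsdef, ← hddef, ← hrdef] at this
      exact this
    rcases le_total (min (s ^ α) (R ^ α) - r ^ α) 0 with h | h
    · exact le_trans (div_nonpos_iff.mpr (Or.inr ⟨h, hdα.le⟩)) hK0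
    · rcases le_total d (R - r) with hcase | hcase
      · -- small d: use antitonicity of increments
        have h1 : min (s ^ α) (R ^ α) - r ^ α ≤ (d + r) ^ α - r ^ α := by
          have : s ^ α ≤ (d + r) ^ α :=
            Real.rpow_le_rpow (hsdef ▸ dist_nonneg) hsd hα0.le
          have := min_le_left (s ^ α) (R ^ α)
          linarith [min_le_left (s ^ α) (R ^ α),
            Real.rpow_le_rpow (hsdef ▸ dist_nonneg) hsd hα0.le]
        have h2 : (min (s ^ α) (R ^ α) - r ^ α) / d ^ α ≤ ((d + r) ^ α - r ^ α) / d ^ α :=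
          div_le_div_of_nonneg_right h1 hdα.le
        have h3 : ((d + r) ^ α - r ^ α) / d ^ α ≤ K := by
          have e1 : ((d + r) ^ α - r ^ α) / d ^ α = (r / d + 1) ^ α - (r / d) ^ α := by
            rw [sub_div, ← Real.div_rpow (by linarith) hd0.le,
              ← Real.div_rpow hr0.le hd0.le]
            congr 2
            rw [eq_comm, div_add_one (ne_of_gt hd0)]
            ring_nf
          have e2 : K = (r / (R - r) + 1) ^ α - (r / (R - r)) ^ α := by
            rw [hK, sub_div, ← Real.div_rpow hR.le (by linarith : (0:ℝ) ≤ R - r),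
              ← Real.div_rpow hr0.le (by linarith : (0:ℝ) ≤ R - r)]
            congr 2
            rw [eq_comm, div_add_one (ne_of_gt (show R - r > 0 by linarith))]
            ring_nf
          rw [e1, e2]
          have hab : r / (R - r) ≤ r / d :=
            div_le_div_of_nonneg_left hr0.le hd0 hcase
          have := aux_incr_antitone hα0 hα1
            (div_pos hr0 (by linarith : (0:ℝ) < R - r)) hab (zero_le_one)
          linarith [this]
        linarith
      · -- large d
        have h1 : min (s ^ α) (R ^ α) - r ^ α ≤ R ^ α - r ^ α := by
          linarith [min_le_right (s ^ α) (R ^ α)]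
        have h2 : (min (s ^ α) (R ^ α) - r ^ α) / d ^ α ≤ (R ^ α - r ^ α) / d ^ α :=
          div_le_div_of_nonneg_right h1 hdα.le
        have h3 : (R ^ α - r ^ α) / d ^ α ≤ K := by
          rw [hK]
          exact div_le_div_of_nonneg_left (by linarith) hRrpos
            (Real.rpow_le_rpow (by linarith) hcase hα0.le)
        linarith
  have hK1 : K < 1 := by
    rw [hK, div_lt_one hRrpos]
    have := aux_strict_subadd hα0 hα1 (by linarith : (0:ℝ) < R - r) hr0
    have e : (R - r) + r = R := by ring
    rw [e] at this
    linarith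
  have hne : S.Nonempty := ⟨-1, hmem⟩
  have hbb : BddBelow S := ⟨-1, hlow⟩
  have hba : BddAbove S := ⟨K, hupp⟩
  have hinf : sInf S ≤ -1 := csInf_le hbb hmem
  have hsup : sSup S < 1 := lt_of_le_of_lt (csSup_le hne hupp) hK1
  refine ⟨hinf, hsup, ?_⟩
  have := add_lt_add_of_lt_of_le hsup hinf
  linarith
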